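/- Let Ω be a locally compact Hausdorff space and Γ a nondegenerate Banach module over C₀(Ω). Then any U₀(Ω)-valued norm N on Γ is unique and is given by the formula N(s)(x) = inf{‖f•s‖ : f ∈ C₀(Ω) real-valued, f ≥ 0, f(x) = 1} for all s ∈ Γ and x ∈ Ω. -/
import Mathlib


open scoped ZeroAtInfty

noncomputable section

variable {𝕜 : Type*} [RCLike 𝕜] {Ω : Type*} [TopologicalSpace Ω]

/-- A Banach module structure over `C₀(Ω, 𝕜)` on a `𝕜`-Banach space `Γ`. -/
structure C0Module (𝕜 : Type*) [RCLike 𝕜] (Ω : Type*) [TopologicalSpace Ω]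
    (Γ : Type*) [NormedAddCommGroup Γ] [NormedSpace 𝕜 Γ] where
  smul : C₀(Ω, 𝕜) →L[𝕜] Γ →L[𝕜] Γ
  mul_smul : ∀ (f g : C₀(Ω, 𝕜)) (s : Γ), smul (f * g) s = smul f (smul g s)
  norm_smul_le : ∀ (f : C₀(Ω, 𝕜)) (s : Γ), ‖smul f s‖ ≤ ‖f‖ * ‖s‖

variable {Γ : Type*} [NormedAddCommGroup Γ] [NormedSpace 𝕜 Γ]

/-- Nondegeneracy of a Banach module over `C₀(Ω, 𝕜)`. -/
def C0Module.Nondegenerate (M : C0Module 𝕜 Ω Γ) : Prop :=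
  Dense (Submodule.span 𝕜 {x : Γ | ∃ (f : C₀(Ω, 𝕜)) (s : Γ), M.smul f s = x} : Set Γ)

/-- The inclusion `C₀(Ω, ℝ) ⊆ C₀(Ω, 𝕜)`. -/
def ofRealC0 (𝕜 : Type*) [RCLike 𝕜] {Ω : Type*} [TopologicalSpace Ω] (f : C₀(Ω, ℝ)) :
    C₀(Ω, 𝕜) where
  toFun := fun x => (f x : 𝕜)
  continuous_toFun := RCLike.continuous_ofReal.comp f.continuous
  zero_at_infty' := by
    have h2 : Filter.Tendsto (fun r : ℝ => (r : 𝕜)) (nhds 0) (nhds 0) := by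
      simpa using (RCLike.continuous_ofReal (K := 𝕜)).tendsto 0
    exact h2.comp f.zero_at_infty'

/-- The pointwise maximum of two functions in `C₀(Ω, ℝ)`. -/
def supC0 (f g : C₀(Ω, ℝ)) : C₀(Ω, ℝ) where
  toFun := fun x => max (f x) (g x)
  continuous_toFun := f.continuous.max g.continuous
  zero_at_infty' := by simpa using f.zero_at_infty'.max g.zero_at_infty'

/-- The AM-identity: `‖(f₁ ⊔ f₂) • s‖ = max ‖f₁ • s‖ ‖f₂ • s‖` for nonnegative real-valued
`f₁, f₂ ∈ C₀(Ω, ℝ)`. -/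
def C0Module.IsAM (M : C0Module 𝕜 Ω Γ) : Prop :=
  ∀ (f₁ f₂ : C₀(Ω, ℝ)), (∀ x, 0 ≤ f₁ x) → (∀ x, 0 ≤ f₂ x) → ∀ s : Γ,
    ‖M.smul (ofRealC0 𝕜 (supC0 f₁ f₂)) s‖ =
      max ‖M.smul (ofRealC0 𝕜 f₁) s‖ ‖M.smul (ofRealC0 𝕜 f₂) s‖

/-- A `U₀(Ω)`-valued norm on a Banach module `Γ` over `C₀(Ω, 𝕜)`. -/
structure IsU0Norm (M : C0Module 𝕜 Ω Γ) (N : Γ → Ω → ℝ) : Prop where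
  nonneg : ∀ (s : Γ) (x : Ω), 0 ≤ N s x
  upperSemicontinuous : ∀ s : Γ, UpperSemicontinuous (N s)
  zero_at_infty : ∀ s : Γ, ∀ ε > 0, ∃ K : Set Ω, IsCompact K ∧ ∀ x ∉ K, N s x ≤ ε
  sup_eq_norm : ∀ s : Γ, (⨆ x : Ω, N s x) = ‖s‖
  smul_eq : ∀ (f : C₀(Ω, 𝕜)) (s : Γ) (x : Ω), N (M.smul f s) x = ‖f x‖ * N s x
  subadd : ∀ (s₁ s₂ : Γ) (x : Ω), N (s₁ + s₂) x ≤ N s₁ x + N s₂ x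

/-- The canonical candidate for the `U₀(Ω)`-valued norm. -/
def normFormula (M : C0Module 𝕜 Ω Γ) (s : Γ) (x : Ω) : ℝ :=
  sInf {r : ℝ | ∃ f : C₀(Ω, ℝ), (∀ y, 0 ≤ f y) ∧ f x = 1 ∧ r = ‖M.smul (ofRealC0 𝕜 f) s‖}


/-- Auxiliary: a compactly supported bump as a `C₀` function. -/
lemma exists_bump_c0 [LocallyCompactSpace Ω] [T2Space Ω] (x : Ω) {U : Set Ω}
    (hU : IsOpen U) (hxU : x ∈ U) :
    ∃ g : C₀(Ω, ℝ), (∀ y, 0 ≤ g y) ∧ (∀ y, g y ≤ 1) ∧ g x = 1 ∧ ∀ y ∉ U, g y = 0 := by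
  obtain ⟨f, hf1, hf0, hfc, hficc⟩ := exists_continuous_one_zero_of_isCompact
    (isCompact_singleton (x := x)) hU.isClosed_compl
    (Set.disjoint_compl_right_iff_subset.mpr (Set.singleton_subset_iff.mpr hxU))
  refine ⟨⟨f, hfc.is_zero_at_infty⟩, fun y => (hficc y).1, fun y => (hficc y).2,
    hf1 rfl, fun y hy => hf0 hy⟩

/-- The `U₀(Ω)`-valued norm on a nondegenerate Banach module over `C₀(Ω)` is
unique and given by the infimum formula. -/
theorem u0Norm_unique
    [LocallyCompactSpace Ω] [T2Space Ω] [CompleteSpace Γ]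
    (M : C0Module 𝕜 Ω Γ) (hM : M.Nondegenerate)
    (N : Γ → Ω → ℝ) (hN : IsU0Norm M N) :
    ∀ (s : Γ) (x : Ω), N s x = normFormula M s x := by
  intro s x
  have hN0 : ∀ y : Ω, N (0 : Γ) y = 0 := by
    intro y
    have : M.smul (0 : C₀(Ω, 𝕜)) s = 0 := by simp
    have h := hN.smul_eq 0 s y
    rw [this] at h
    simpa using h
  -- key estimate: for any admissible f, N s x ≤ ‖f • s‖
  have key : ∀ f : C₀(Ω, ℝ), (∀ y, 0 ≤ f y) → f x = 1 →
      N s x ≤ ‖M.smul (ofRealC0 𝕜 f) s‖ := by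
    intro f hf hfx
    have hval : N (M.smul (ofRealC0 𝕜 f) s) x = N s x := by
      rw [hN.smul_eq]
      have : (ofRealC0 𝕜 f) x = ((1 : ℝ) : 𝕜) := by
        simp [ofRealC0, hfx]
      rw [this]
      simp
    by_cases hb : BddAbove (Set.range (N (M.smul (ofRealC0 𝕜 f) s)))
    · calc N s x = N (M.smul (ofRealC0 𝕜 f) s) x := hval.symm
        _ ≤ ⨆ y, N (M.smul (ofRealC0 𝕜 f) s) y := le_ciSup hb x
        _ = ‖M.smul (ofRealC0 𝕜 f) s‖ := hN.sup_eq_norm _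
    · have h0 : ‖M.smul (ofRealC0 𝕜 f) s‖ = 0 := by
        rw [← hN.sup_eq_norm, Real.iSup_of_not_bddAbove hb]
      have : M.smul (ofRealC0 𝕜 f) s = 0 := norm_eq_zero.mp h0
      rw [h0, ← hval, this, hN0]
  have hSne : ∃ r, r ∈ {r : ℝ | ∃ f : C₀(Ω, ℝ), (∀ y, 0 ≤ f y) ∧ f x = 1 ∧
      r = ‖M.smul (ofRealC0 𝕜 f) s‖} := by
    obtain ⟨g, hg0, hg1, hgx, -⟩ := exists_bump_c0 x isOpen_univ (Set.mem_univ x)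
    exact ⟨_, g, hg0, hgx, rfl⟩
  apply le_antisymm
  · exact le_csInf hSne (by rintro r ⟨f, hf, hfx, rfl⟩; exact key f hf hfx)
  · -- sInf ≤ N s x : for every ε > 0 find a bump supported where N s < N s x + ε
    apply le_of_forall_pos_le_add
    intro ε hε
    have husc := hN.upperSemicontinuous s x (N s x + ε) (by linarith)
    obtain ⟨U, hUsub, hUopen, hxU⟩ := eventually_nhds_iff.mp husc
    obtain ⟨g, hg0, hg1, hgx, hgU⟩ := exists_bump_c0 x hUopen hxU
    have hbound : ‖M.smul (ofRealC0 𝕜 g) s‖ ≤ N s x + ε := by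
      rw [← hN.sup_eq_norm]
      have : Nonempty Ω := ⟨x⟩
      apply ciSup_le
      intro y
      rw [hN.smul_eq]
      have : ‖(ofRealC0 𝕜 g) y‖ = g y := by
        simp only [ofRealC0]
        rw [show ((⟨⟨fun x => ((g x : ℝ) : 𝕜), _⟩, _⟩ : C₀(Ω, 𝕜)) y) = ((g y : ℝ) : 𝕜) from rfl]
        rw [RCLike.norm_ofReal, abs_of_nonneg (hg0 y)]
      rw [this]
      by_cases hyU : y ∈ U
      · calc g y * N s y ≤ 1 * N s y :=
            mul_le_mul_of_nonneg_right (hg1 y) (hN.nonneg s y)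
          _ = N s y := one_mul _
          _ ≤ N s x + ε := le_of_lt (hUsub y hyU)
      · rw [hgU y hyU, zero_mul]
        have := hN.nonneg s x
        linarith
    calc normFormula M s x ≤ ‖M.smul (ofRealC0 𝕜 g) s‖ := by
          apply csInf_le
          · exact ⟨0, by rintro r ⟨f, hf, hfx, rfl⟩; exact norm_nonneg _⟩
          · exact ⟨g, hg0, hgx, rfl⟩
      _ ≤ N s x + ε := hbound

end
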